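/- arXiv:1808.02170 — 7 statements merged into one kernel-verified Lean document; each statement's English description precedes it below -/
import Mathlib

section
/- For 0 < α ≤ 1 and θ ∈ (0, π), the imaginary part of (1 - e^{iθ})^α · (1 + α/2 - (α/2) e^{iθ}) is strictly negative, where (·)^α denotes the principal branch of the power. -/
open Complex

/-- For 0 < α ≤ 1, θ ∈ (0,π), Im((1 - e^{iθ})^α (1 + α/2 - (α/2)e^{iθ})) < 0. -/
theorem W2_neg_upper (α θ : ℝ) (hα0 : 0 < α) (hα1 : α ≤ 1)
    (hθ : θ ∈ Set.Ioo (0 : ℝ) Real.pi) :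
    ((1 - Complex.exp (θ * I)) ^ (α : ℂ) *
        (1 + α / 2 - (α / 2) * Complex.exp (θ * I))).im < 0 := by
  obtain ⟨hθ0, hθπ⟩ := hθ
  have hπ := Real.pi_pos
  set r : ℝ := 2 * Real.sin (θ / 2) with hr
  set ψ : ℝ := (θ - Real.pi) / 2 with hψ
  have hsin : 0 < Real.sin (θ / 2) :=
    Real.sin_pos_of_pos_of_lt_pi (by linarith) (by linarith)
  have hr0 : 0 < r := by positivity
  -- trig identities
  have hcosθ : Real.cos θ = 1 - 2 * Real.sin (θ / 2) ^ 2 := by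
    have h1 := Real.cos_two_mul (θ / 2)
    rw [show 2 * (θ / 2) = θ by ring] at h1
    nlinarith [Real.sin_sq_add_cos_sq (θ / 2)]
  have hsinθ : Real.sin θ = 2 * Real.sin (θ / 2) * Real.cos (θ / 2) := by
    have := Real.sin_two_mul (θ / 2)
    rw [show 2 * (θ / 2) = θ by ring] at this
    linarith
  have hcosψ : Real.cos ψ = Real.sin (θ / 2) := by
    rw [hψ, show (θ - Real.pi) / 2 = θ / 2 - Real.pi / 2 by ring, Real.cos_sub]
    simp
  have hsinψ : Real.sin ψ = -Real.cos (θ / 2) := by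
    rw [hψ, show (θ - Real.pi) / 2 = θ / 2 - Real.pi / 2 by ring, Real.sin_sub]
    simp
  -- z = r * exp(ψ I)
  have hz : (1 : ℂ) - Complex.exp (θ * I) = (r : ℂ) * Complex.exp ((ψ : ℝ) * I) := by
    apply Complex.ext
    · simp [Complex.exp_ofReal_mul_I_re, hcosψ, hcosθ]
      ring
    · simp [Complex.exp_ofReal_mul_I_im, hsinψ, hsinθ]
      try ring
      left
      rw [hr, mul_one_div, mul_comm]
  have hψmem : ψ ∈ Set.Ioc (-Real.pi) Real.pi := by
    constructor <;> [skip; skip] <;> rw [hψ] <;> linarith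
  have harg : (1 - Complex.exp (θ * I)).arg = ψ := by
    rw [hz]
    rw [Complex.arg_real_mul _ hr0]
    rw [Complex.exp_mul_I]
    exact Complex.arg_cos_add_sin_mul_I hψmem
  have habs : ‖(1 - Complex.exp (θ * I))‖ = r := by
    rw [hz, norm_mul, Complex.norm_exp_ofReal_mul_I, Complex.norm_real, Real.norm_eq_abs,
      abs_of_pos hr0, mul_one]
  have hne : (1 : ℂ) - Complex.exp (θ * I) ≠ 0 := by
    intro h
    rw [h] at habs
    simp at habs
    linarith
  -- compute the power
  set R : ℝ := Real.exp (α * Real.log r) with hR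
  have hR0 : 0 < R := Real.exp_pos _
  have hpow : (1 - Complex.exp (θ * I)) ^ (α : ℂ)
      = (R : ℂ) * Complex.exp (((α * ψ : ℝ) : ℂ) * I) := by
    rw [Complex.cpow_def_of_ne_zero hne]
    have hlog : Complex.log (1 - Complex.exp (θ * I))
        = (Real.log r : ℂ) + (ψ : ℂ) * I := by
      rw [Complex.log]
      rw [habs, harg]
    rw [hlog]
    rw [show ((Real.log r : ℂ) + (ψ : ℂ) * I) * (α : ℂ)
        = ((α * Real.log r : ℝ) : ℂ) + ((α * ψ : ℝ) : ℂ) * I by push_cast; ring]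
    rw [Complex.exp_add, ← Complex.ofReal_exp]
  rw [hpow]
  have hfac : (R : ℂ) * Complex.exp (((α * ψ : ℝ) : ℂ) * I) *
        (1 + (α : ℂ) / 2 - (α : ℂ) / 2 * Complex.exp (θ * I))
      = (R : ℂ) * (((1 + α / 2 : ℝ) : ℂ) * Complex.exp (((α * ψ : ℝ) : ℂ) * I)
          - ((α / 2 : ℝ) : ℂ) * Complex.exp (((α * ψ + θ : ℝ) : ℂ) * I)) := by
    rw [show ((α * ψ + θ : ℝ) : ℂ) * I = ((α * ψ : ℝ) : ℂ) * I + (θ : ℂ) * I by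
      push_cast; ring, Complex.exp_add]
    push_cast; ring
  rw [hfac]
  have him : ((R : ℂ) * (((1 + α / 2 : ℝ) : ℂ) * Complex.exp (((α * ψ : ℝ) : ℂ) * I)
          - ((α / 2 : ℝ) : ℂ) * Complex.exp (((α * ψ + θ : ℝ) : ℂ) * I))).im
      = R * ((1 + α / 2) * Real.sin (α * ψ) - α / 2 * Real.sin (α * ψ + θ)) := by
    have him0 : ∀ (a x : ℝ), (((a : ℝ) : ℂ) * Complex.exp (((x : ℝ) : ℂ) * I)).im
        = a * Real.sin x := fun a x => by
      simp [Complex.mul_im, Complex.exp_ofReal_mul_I_im, Complex.exp_ofReal_mul_I_re]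
    rw [Complex.mul_im, Complex.ofReal_re, Complex.ofReal_im, zero_mul, add_zero,
      Complex.sub_im, him0, him0]
  rw [him]
  apply mul_neg_of_pos_of_neg hR0
  -- the trig inequality
  set s : ℝ := (Real.pi - θ) / 2 with hsdef
  have hs0 : 0 < s := by rw [hsdef]; linarith
  have hs2 : s < Real.pi / 2 := by rw [hsdef]; linarith
  have e1 : Real.sin (α * ψ) = -Real.sin (α * s) := by
    rw [show α * ψ = -(α * s) by rw [hψ, hsdef]; ring, Real.sin_neg]
  have e2 : Real.sin (α * ψ + θ)
      = Real.sin (α * s) * Real.cos (2 * s) + Real.cos (α * s) * Real.sin (2 * s) := by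
    rw [show α * ψ + θ = Real.pi - (α * s + 2 * s) by rw [hψ, hsdef]; ring,
      Real.sin_pi_sub, Real.sin_add]
  have hαs0 : 0 < α * s := by positivity
  have hαs2 : α * s < Real.pi / 2 := by nlinarith
  have p1 : 0 < Real.sin (α * s) := Real.sin_pos_of_pos_of_lt_pi hαs0 (by linarith)
  have p2 : 0 < Real.cos (α * s) := Real.cos_pos_of_mem_Ioo ⟨by linarith, hαs2⟩
  have p3 : 0 < Real.sin (2 * s) := Real.sin_pos_of_pos_of_lt_pi (by linarith) (by linarith)
  have p4 : -1 ≤ Real.cos (2 * s) := Real.neg_one_le_cos _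
  rw [e1, e2]
  nlinarith [mul_pos (mul_pos hα0 p2) p3,
    mul_nonneg (mul_nonneg hα0.le p1.le) (by linarith : (0:ℝ) ≤ 1 + Real.cos (2 * s))]
end

section
/- For 0 < α ≤ 1 and θ ∈ (-π, 0), the imaginary part of (1 - e^{iθ})^α · (1 + α/2 - (α/2) e^{iθ}) is strictly positive, where (·)^α denotes the principal branch of the power. -/
open Complex

/-- For 0 < α ≤ 1, θ ∈ (-π,0), Im((1 - e^{iθ})^α (1 + α/2 - (α/2)e^{iθ})) > 0. -/
theorem W2_pos_lower (α θ : ℝ) (hα0 : 0 < α) (hα1 : α ≤ 1)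
    (hθ : θ ∈ Set.Ioo (-Real.pi) (0 : ℝ)) :
    0 < ((1 - Complex.exp (θ * I)) ^ (α : ℂ) *
        (1 + α / 2 - (α / 2) * Complex.exp (θ * I))).im := by
  obtain ⟨h1, h2⟩ := hθ
  have hpi := Real.pi_pos
  have hsin : Real.sin θ < 0 := Real.sin_neg_of_neg_of_neg_pi_lt h2 h1
  have hcos : Real.cos θ < 1 := by
    rcases lt_or_eq_of_le (Real.cos_le_one θ) with h | h
    · exact h
    · exfalso
      have := (Real.cos_eq_one_iff_of_lt_of_lt (by linarith) (by linarith)).1 h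
      linarith
  set z : ℂ := 1 - Complex.exp (θ * I) with hzdef
  have hzre : z.re = 1 - Real.cos θ := by
    simp [hzdef, Complex.sub_re, Complex.exp_ofReal_mul_I_re]
  have hzim : z.im = - Real.sin θ := by
    simp [hzdef, Complex.sub_im, Complex.exp_ofReal_mul_I_im]
  have hre0 : 0 < z.re := by rw [hzre]; linarith
  have him0 : 0 < z.im := by rw [hzim]; linarith
  have hz0 : z ≠ 0 := by
    intro h
    rw [h] at hre0
    simp at hre0
  -- bounds on arg z
  have harg_pos : 0 < Complex.arg z := by
    rcases lt_or_eq_of_le (Complex.arg_nonneg_iff.2 him0.le) with h | h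
    · exact h
    · exfalso
      have := (Complex.arg_eq_zero_iff.1 h.symm).2
      rw [this] at him0
      exact lt_irrefl 0 him0
  have harg_lt : Complex.arg z < Real.pi / 2 :=
    Complex.arg_lt_pi_div_two_iff.2 (Or.inl hre0)
  -- the product of α and arg z
  have hφ_pos : 0 < Complex.arg z * α := mul_pos harg_pos hα0
  have hφ_lt : Complex.arg z * α < Real.pi / 2 := by
    calc Complex.arg z * α ≤ Complex.arg z * 1 := by
          exact mul_le_mul_of_nonneg_left hα1 harg_pos.le
      _ = Complex.arg z := mul_one _
      _ < Real.pi / 2 := harg_lt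
  have hsinφ : 0 < Real.sin (Complex.arg z * α) :=
    Real.sin_pos_of_pos_of_lt_pi hφ_pos (by linarith)
  have hcosφ : 0 < Real.cos (Complex.arg z * α) :=
    Real.cos_pos_of_mem_Ioo ⟨by linarith, hφ_lt⟩
  -- rewrite the cpow
  rw [Complex.cpow_def_of_ne_zero hz0]
  set w : ℂ := 1 + (α : ℂ) / 2 - ((α : ℂ) / 2) * Complex.exp (θ * I) with hwdef
  have hwre : w.re = 1 + α / 2 - α / 2 * Real.cos θ := by
    simp [hwdef, Complex.sub_re, Complex.add_re, Complex.mul_re,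
      Complex.exp_ofReal_mul_I_re, Complex.exp_ofReal_mul_I_im]
  have hwim : w.im = - (α / 2 * Real.sin θ) := by
    simp [hwdef, Complex.sub_im, Complex.add_im, Complex.mul_im,
      Complex.exp_ofReal_mul_I_re, Complex.exp_ofReal_mul_I_im]
  have hcre : (Complex.log z * (α : ℂ)).re = Real.log ‖z‖ * α := by
    simp [Complex.mul_re, Complex.log_re]
  have hcim : (Complex.log z * (α : ℂ)).im = Complex.arg z * α := by
    simp [Complex.mul_im, Complex.log_im]
  rw [Complex.mul_im, Complex.exp_re, Complex.exp_im, hcre, hcim, hwre, hwim]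
  have hE : 0 < Real.exp (Real.log ‖z‖ * α) := Real.exp_pos _
  have hwre_pos : 0 < 1 + α / 2 - α / 2 * Real.cos θ := by nlinarith
  have hwim_pos : 0 < - (α / 2 * Real.sin θ) := by nlinarith
  have t1 : 0 < Real.exp (Real.log ‖z‖ * α) *
      Real.cos (Complex.arg z * α) * (- (α / 2 * Real.sin θ)) :=
    mul_pos (mul_pos hE hcosφ) hwim_pos
  have t2 : 0 < Real.exp (Real.log ‖z‖ * α) *
      Real.sin (Complex.arg z * α) * (1 + α / 2 - α / 2 * Real.cos θ) :=
    mul_pos (mul_pos hE hsinφ) hwre_pos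
  linarith
end

section
/- For 0 < α ≤ 1 and θ ∈ (-π, 0), one has (1 + α/2 - (α/2) cos θ) · sin((α/2)(θ + π)) - (α/2) · cos((α/2)(θ + π)) · sin θ > 0. -/
/-- The trigonometric inequality on the lower semicircle:
(1 + α/2 - (α/2)cos θ) sin((α/2)(θ+π)) - (α/2) cos((α/2)(θ+π)) sin θ > 0
for 0 < α ≤ 1 and θ ∈ (-π, 0). -/
theorem trig_bracket_pos (α θ : ℝ) (hα0 : 0 < α) (hα1 : α ≤ 1)
    (hθ : θ ∈ Set.Ioo (-Real.pi) (0 : ℝ)) :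
    0 < (1 + α / 2 - (α / 2) * Real.cos θ) * Real.sin ((α / 2) * (θ + Real.pi))
        - (α / 2) * Real.cos ((α / 2) * (θ + Real.pi)) * Real.sin θ := by
  obtain ⟨h1, h2⟩ := hθ
  have hpi := Real.pi_pos
  have hφpos : 0 < (α / 2) * (θ + Real.pi) := by nlinarith
  have hφlt : (α / 2) * (θ + Real.pi) < Real.pi / 2 := by nlinarith
  have hsinφ : 0 < Real.sin ((α / 2) * (θ + Real.pi)) :=
    Real.sin_pos_of_pos_of_lt_pi hφpos (by linarith)
  have hcosφ : 0 < Real.cos ((α / 2) * (θ + Real.pi)) :=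
    Real.cos_pos_of_mem_Ioo ⟨by linarith, hφlt⟩
  have hsinθ : Real.sin θ < 0 := Real.sin_neg_of_neg_of_neg_pi_lt h2 h1
  have hcosθ : Real.cos θ ≤ 1 := Real.cos_le_one θ
  have hfac : (0:ℝ) < 1 + α / 2 - (α / 2) * Real.cos θ := by nlinarith
  nlinarith [mul_pos hcosφ (neg_pos.mpr hsinθ), mul_pos hfac hsinφ, hα0.le]
end

section
/- For every 0 < α ≤ 1 and every complex z with |z| ≤ 1, the real part of (1 - z)^α · (1 + α/2 - (α/2) z) is nonnegative, where (·)^α is the principal branch (with the convention that the value at z = 1 is 0). -/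
open Complex

lemma W1_key (α c s ca sa r : ℝ) (hα0 : 0 < α) (hα1 : α ≤ 1)
    (hc : 0 ≤ c) (hs : 0 ≤ s) (hsa : 0 ≤ sa) (hca0 : 0 ≤ ca)
    (hpyth : s ^ 2 + c ^ 2 = 1) (hcac : c ≤ ca) (hsas : sa ≤ s)
    (hr0 : 0 ≤ r) (hr : r ≤ 2 * c) :
    0 ≤ ca + α * r / 2 * (ca * c - sa * s) := by
  rcases le_or_gt 0 (ca * c - sa * s) with h | h
  · have : 0 ≤ α * r / 2 * (ca * c - sa * s) := by positivity
    linarith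
  · have h1 : α * c * (ca * c - sa * s) ≤ α * r / 2 * (ca * c - sa * s) := by
      apply mul_le_mul_of_nonpos_right _ h.le
      nlinarith
    have h2 : α * c * s ^ 2 = α * c - α * c * c ^ 2 := by
      have hs2 : s ^ 2 = 1 - c ^ 2 := by linarith
      rw [hs2]; ring
    nlinarith [mul_nonneg (mul_nonneg hα0.le hc) (mul_nonneg hs (sub_nonneg.mpr hsas)),
      mul_nonneg (mul_nonneg hα0.le (sq_nonneg c)) (sub_nonneg.mpr hcac),
      mul_nonneg hc (sub_nonneg.mpr hα1),
      mul_nonneg (mul_nonneg hα0.le hc) (sq_nonneg c)]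

/-- The real part of W(z) = (1-z)^α (1 + α/2 - (α/2)z) is nonnegative on the
closed unit disk, for 0 < α ≤ 1 (principal branch, value 0 at z = 1). -/
theorem W1_nonneg (α : ℝ) (hα0 : 0 < α) (hα1 : α ≤ 1) (z : ℂ) (hz : ‖z‖ ≤ 1) :
    0 ≤ ((1 - z) ^ (α : ℂ) * (1 + α / 2 - (α / 2) * z)).re := by
  by_cases hz1 : z = 1
  · subst hz1
    simp [Complex.zero_cpow (by exact_mod_cast hα0.ne' : (α : ℂ) ≠ 0)]
  · set w : ℂ := 1 - z with hwdef
    have hw : w ≠ 0 := sub_ne_zero.mpr fun h => hz1 h.symm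
    set r : ℝ := ‖w‖ with hrdef
    set θ : ℝ := Complex.arg w with hθdef
    have hr0 : 0 < r := norm_pos_iff.mpr hw
    -- real part of w is nonneg
    have hzre : z.re ≤ 1 := le_trans (Complex.re_le_norm z) hz
    have hwre : 0 ≤ w.re := by simp [hwdef, Complex.sub_re]; linarith
    have hθ2 : |θ| ≤ Real.pi / 2 := Complex.abs_arg_le_pi_div_two_iff.mpr hwre
    -- coordinates
    have hwre' : w.re = r * Real.cos θ := by
      rw [Complex.cos_arg hw]; field_simp; rfl
    have hwim' : w.im = r * Real.sin θ := by
      rw [Complex.sin_arg]; field_simp; rfl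
    -- r ≤ 2 cos θ
    have hnormsq : r ^ 2 = w.re ^ 2 + w.im ^ 2 := by
      rw [hrdef, Complex.sq_norm, Complex.normSq_apply]; ring
    have hzsq : z.re ^ 2 + z.im ^ 2 ≤ 1 := by
      have := Complex.sq_norm z
      rw [Complex.normSq_apply] at this
      have hz' : ‖z‖ ≤ 1 := hz
      nlinarith [hz', norm_nonneg z]
    have hr2 : r ≤ 2 * Real.cos θ := by
      have hwz : w.re = 1 - z.re ∧ w.im = -z.im := by
        constructor <;> simp [hwdef, Complex.sub_re, Complex.sub_im]
      have key : r ^ 2 ≤ 2 * w.re := by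
        rw [hnormsq, hwz.1, hwz.2]; nlinarith
      rw [hwre'] at key
      nlinarith
    -- compute the cpow
    have hA : w ^ (α : ℂ) = Complex.exp (Complex.log w * (α : ℂ)) :=
      Complex.cpow_def_of_ne_zero hw _
    have hlogre : (Complex.log w * (α : ℂ)).re = Real.log r * α := by
      simp [Complex.mul_re, Complex.log_re, Complex.log_im]; exact Or.inl rfl
    have hlogim : (Complex.log w * (α : ℂ)).im = θ * α := by
      simp [Complex.mul_im, Complex.log_re, Complex.log_im]; exact Or.inl rfl
    have hRe : (w ^ (α : ℂ)).re = r ^ α * Real.cos (α * θ) := by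
      rw [hA, Complex.exp_re, hlogre, hlogim, Real.rpow_def_of_pos hr0, mul_comm θ α]
    have hIm : (w ^ (α : ℂ)).im = r ^ α * Real.sin (α * θ) := by
      rw [hA, Complex.exp_im, hlogre, hlogim, Real.rpow_def_of_pos hr0, mul_comm θ α]
    -- the second factor
    have hB : (1 + (α : ℂ) / 2 - (α : ℂ) / 2 * z) = 1 + ((α : ℂ) / 2) * w := by
      rw [hwdef]; ring
    have hBre : ((1 : ℂ) + ((α : ℂ) / 2) * w).re = 1 + α / 2 * (r * Real.cos θ) := by
      simp [Complex.add_re, Complex.mul_re, hwre']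
    have hBim : ((1 : ℂ) + ((α : ℂ) / 2) * w).im = α / 2 * (r * Real.sin θ) := by
      simp [Complex.add_im, Complex.mul_im, hwim']
    show 0 ≤ (w ^ (α : ℂ) * (1 + (α : ℂ) / 2 - (α : ℂ) / 2 * z)).re
    rw [hB, Complex.mul_re, hRe, hIm, hBre, hBim]
    have hEq : r ^ α * Real.cos (α * θ) * (1 + α / 2 * (r * Real.cos θ)) -
        r ^ α * Real.sin (α * θ) * (α / 2 * (r * Real.sin θ)) =
        r ^ α * (Real.cos (α * θ) + α * r / 2 *
          (Real.cos (α * θ) * Real.cos θ - Real.sin (α * θ) * Real.sin θ)) := by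
      ring
    rw [hEq]
    apply mul_nonneg (Real.rpow_nonneg hr0.le α)
    -- reduce to |θ|
    set φ : ℝ := |θ| with hφdef
    have hφ0 : 0 ≤ φ := abs_nonneg θ
    have hcosθ : Real.cos θ = Real.cos φ := (Real.cos_abs θ).symm
    have hcosα : Real.cos (α * θ) = Real.cos (α * φ) := by
      rw [← Real.cos_abs (α * θ), abs_mul, abs_of_pos hα0]
    have hsinprod : Real.sin (α * θ) * Real.sin θ = Real.sin (α * φ) * Real.sin φ := by
      rcases abs_cases θ with ⟨h1, _⟩ | ⟨h1, _⟩
      · rw [hφdef, h1]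
      · rw [hφdef, h1, mul_neg, Real.sin_neg, Real.sin_neg, neg_mul_neg]
    rw [hcosθ, hcosα, hsinprod]
    have hφπ : φ ≤ Real.pi / 2 := hθ2
    have hαφ0 : 0 ≤ α * φ := mul_nonneg hα0.le hφ0
    have hαφφ : α * φ ≤ φ := by nlinarith
    have hπpos := Real.pi_pos
    apply W1_key α (Real.cos φ) (Real.sin φ) (Real.cos (α * φ)) (Real.sin (α * φ)) r hα0 hα1
    · exact Real.cos_nonneg_of_mem_Icc ⟨by linarith, hφπ⟩
    · exact Real.sin_nonneg_of_nonneg_of_le_pi hφ0 (by linarith)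
    · exact Real.sin_nonneg_of_nonneg_of_le_pi hαφ0 (by linarith)
    · exact Real.cos_nonneg_of_mem_Icc ⟨by linarith, by linarith⟩
    · exact Real.sin_sq_add_cos_sq φ
    · exact Real.cos_le_cos_of_nonneg_of_le_pi hαφ0 (by linarith) hαφφ
    · exact Real.sin_le_sin_of_le_of_le_pi_div_two (by linarith) hφπ hαφφ
    · exact hr0.le
    · rwa [hcosθ] at hr2
end

section
/- Let 0 < α ≤ 1 and let λ, ρ, κ be real numbers with λ < 0, ρ ≤ 0, and κ > (λ - 3ρ)/4. Then for every complex z with |z| ≤ 1 and every real c > 0, one has (1 - z)^α (1 + α/2 - (α/2) z) ≠ c · (λ - κ + (ρ + κ)(2z - z²)), where (·)^α is the principal branch. -/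
open Complex

/-- Key real inequality: positivity of the real part factor. -/
lemma keypos (t cθ sθ cβ sβ : ℝ) (ht : 0 < t) (htc : t ≤ cθ) (hc : 0 < cθ)
    (hcb : cθ ≤ cβ) (hsb : 0 ≤ sβ) (hsbs : sβ ≤ sθ)
    (hpyth : sθ ^ 2 + cθ ^ 2 = 1) :
    0 < cβ + t * (cθ * cβ - sθ * sβ) := by
  rcases le_or_gt 0 (cθ * cβ - sθ * sβ) with h | h
  · nlinarith
  · have h1 : cβ + t * (cθ * cβ - sθ * sβ) ≥ cβ + cθ * (cθ * cβ - sθ * sβ) := by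
      nlinarith
    have hsθ : 0 ≤ sθ := le_trans hsb hsbs
    nlinarith [mul_pos hc (mul_pos hc hc),
      mul_nonneg (sub_nonneg.mpr hcb) (by positivity : (0:ℝ) ≤ 1 + cθ ^ 2),
      mul_nonneg (sub_nonneg.mpr hsbs) (mul_nonneg hsθ hc.le)]

set_option maxHeartbeats 1000000 in
/-- Auxiliary version of the theorem assuming `z.im ≤ 0`. -/
lemma uncond_stability_q2_aux (α lam ρ κ : ℝ) (hα0 : 0 < α) (hα1 : α ≤ 1)
    (hlam : lam < 0) (hρ : ρ ≤ 0) (hκ : κ > (lam - 3 * ρ) / 4)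
    (z : ℂ) (hz : ‖z‖ ≤ 1) (him : z.im ≤ 0) (c : ℝ) (hc : 0 < c) :
    (1 - z) ^ (α : ℂ) * (1 + α / 2 - (α / 2) * z) ≠
      (c : ℂ) * ((lam : ℂ) - κ + (ρ + κ) * (2 * z - z ^ 2)) := by
  intro h
  set w : ℂ := 1 - z with hw_def
  -- rewrite the equation in terms of w
  have h2 : w ^ (α : ℂ) * (1 + (↑(α / 2) : ℂ) * w) =
      (↑c : ℂ) * ((↑(lam + ρ) : ℂ) - (↑(ρ + κ) : ℂ) * (w * w)) := by
    have e1 : (1 + (α : ℂ) / 2 - ((α : ℂ) / 2) * z) = 1 + (↑(α / 2) : ℂ) * w := by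
      rw [hw_def]; push_cast; ring
    have e2 : (c : ℂ) * ((lam : ℂ) - κ + (ρ + κ) * (2 * z - z ^ 2)) =
        (↑c : ℂ) * ((↑(lam + ρ) : ℂ) - (↑(ρ + κ) : ℂ) * (w * w)) := by
      rw [hw_def]; push_cast; ring
    rw [← e1, ← e2]; exact h
  by_cases hw : w = 0
  · rw [hw] at h2
    rw [Complex.zero_cpow (Complex.ofReal_ne_zero.mpr hα0.ne')] at h2
    have h3 := congrArg Complex.re h2
    simp [Complex.mul_re] at h3
    rcases h3 with h' | h' <;> linarith only [hc, hlam, hρ, h']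
  -- main case : w ≠ 0
  have hznorm : ‖z‖ ≤ 1 := by exact hz
  have hz2 : z.re ^ 2 + z.im ^ 2 ≤ 1 := by
    have h1 := Complex.sq_norm z
    rw [Complex.normSq_apply] at h1
    have h2' := pow_le_pow_left₀ (norm_nonneg z) hznorm 2
    rw [one_pow] at h2'
    linarith only [h1, h2']
  set u : ℝ := w.re with hu_def
  set v : ℝ := w.im with hv_def
  have hu_z : u = 1 - z.re := by simp [hu_def, hw_def]
  have hv_z : v = -z.im := by simp [hv_def, hw_def]
  have hdisk : u ^ 2 + v ^ 2 ≤ 2 * u := by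
    rw [hu_z, hv_z]; nlinarith only [hz2]
  have hwnormSq : 0 < u ^ 2 + v ^ 2 := by
    have h1 := Complex.normSq_pos.mpr hw
    rw [Complex.normSq_apply, ← hu_def, ← hv_def] at h1
    nlinarith only [h1]
  have hupos : 0 < u := by linarith only [hdisk, hwnormSq, sq_nonneg u, sq_nonneg v]
  set r : ℝ := ‖w‖ with hr_def
  have hrpos : 0 < r := norm_pos_iff.mpr hw
  have hr2 : r ^ 2 = u ^ 2 + v ^ 2 := by
    rw [hr_def, Complex.sq_norm, Complex.normSq_apply]; ring
  set θ : ℝ := Complex.arg w with hθ_def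
  have hcosθ : Real.cos θ = u / r := Complex.cos_arg hw
  have hsinθ : Real.sin θ = v / r := Complex.sin_arg w
  have hu_rcos : u = r * Real.cos θ := by rw [hcosθ]; field_simp
  have hv_rsin : v = r * Real.sin θ := by rw [hsinθ]; field_simp
  have hθ0 : 0 ≤ θ := Complex.arg_nonneg_iff.mpr (by rw [← hv_def, hv_z]; linarith only [him])
  have hθlt : θ < Real.pi / 2 := by
    have h1 := Complex.abs_arg_lt_pi_div_two_iff.mpr (Or.inl (show 0 < w.re from hupos))
    calc θ ≤ |θ| := le_abs_self θ
    _ < Real.pi / 2 := h1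
  have hθpi : θ ≤ Real.pi := by
    have := Real.pi_pos; linarith only [this, hθlt]
  have hcospos : 0 < Real.cos θ := by
    apply Real.cos_pos_of_mem_Ioo
    constructor
    · have := Real.pi_pos; linarith only [this, hθ0]
    · exact hθlt
  have hrle : r ≤ 2 * Real.cos θ := by
    have h1 : r ^ 2 ≤ 2 * (r * Real.cos θ) := by rw [← hu_rcos, hr2]; linarith only [hdisk]
    have h2' : r * r ≤ r * (2 * Real.cos θ) := by
      calc r * r = r ^ 2 := (pow_two r).symm
      _ ≤ 2 * (r * Real.cos θ) := h1
      _ = r * (2 * Real.cos θ) := by ring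
    exact le_of_mul_le_mul_left h2' hrpos
  set E : ℝ := Real.exp (α * Real.log r) with hE_def
  have hEpos : 0 < E := Real.exp_pos _
  set cβ : ℝ := Real.cos (α * θ) with hcβ_def
  set sβ : ℝ := Real.sin (α * θ) with hsβ_def
  set cθ : ℝ := Real.cos θ with hcθ_def
  set sθ : ℝ := Real.sin θ with hsθ_def
  -- the cpow formula
  have hA : (w ^ (α : ℂ)).re = E * cβ := by
    rw [Complex.cpow_def_of_ne_zero hw, Complex.exp_re]
    simp only [Complex.mul_re, Complex.mul_im, Complex.log_re, Complex.log_im,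
      Complex.ofReal_re, Complex.ofReal_im, mul_zero, sub_zero, zero_mul, add_zero,
      zero_add]
    rw [hE_def, hcβ_def, ← hr_def, ← hθ_def, mul_comm (Real.log r) α, mul_comm θ α]
  have hB : (w ^ (α : ℂ)).im = E * sβ := by
    rw [Complex.cpow_def_of_ne_zero hw, Complex.exp_im]
    simp only [Complex.mul_re, Complex.mul_im, Complex.log_re, Complex.log_im,
      Complex.ofReal_re, Complex.ofReal_im, mul_zero, sub_zero, zero_mul, add_zero,
      zero_add]
    rw [hE_def, hsβ_def, ← hr_def, ← hθ_def, mul_comm (Real.log r) α, mul_comm θ α]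
  -- real and imaginary parts of the equation
  have hre : E * cβ * (1 + (α / 2) * u) - E * sβ * ((α / 2) * v) =
      c * ((lam + ρ) - (ρ + κ) * (u * u - v * v)) := by
    have h3 := congrArg Complex.re h2
    simp only [Complex.mul_re, Complex.mul_im, Complex.add_re, Complex.add_im,
      Complex.sub_re, Complex.sub_im, Complex.one_re, Complex.one_im,
      Complex.ofReal_re, Complex.ofReal_im, hA, hB, ← hu_def, ← hv_def] at h3
    linear_combination h3
  have him2 : E * cβ * ((α / 2) * v) + E * sβ * (1 + (α / 2) * u) =
      c * (-(ρ + κ) * (u * v + v * u)) := by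
    have h3 := congrArg Complex.im h2
    simp only [Complex.mul_re, Complex.mul_im, Complex.add_re, Complex.add_im,
      Complex.sub_re, Complex.sub_im, Complex.one_re, Complex.one_im,
      Complex.ofReal_re, Complex.ofReal_im, hA, hB, ← hu_def, ← hv_def] at h3
    linear_combination h3
  -- trigonometric facts
  have hβ0 : 0 ≤ α * θ := mul_nonneg hα0.le hθ0
  have hβθ : α * θ ≤ θ := by
    have h1 := mul_nonneg (sub_nonneg.mpr hα1) hθ0
    nlinarith only [h1]
  have hcβθ : cθ ≤ cβ := Real.cos_le_cos_of_nonneg_of_le_pi hβ0 hθpi hβθ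
  have hsβ0 : 0 ≤ sβ := Real.sin_nonneg_of_nonneg_of_le_pi hβ0 (le_trans hβθ hθpi)
  have hsθ0 : 0 ≤ sθ := Real.sin_nonneg_of_nonneg_of_le_pi hθ0 hθpi
  have hsβθ : sβ ≤ sθ := by
    apply Real.sin_le_sin_of_le_of_le_pi_div_two _ (le_of_lt hθlt) hβθ
    have := Real.pi_pos; linarith only [this, hβ0]
  have hpyth : sθ ^ 2 + cθ ^ 2 = 1 := Real.sin_sq_add_cos_sq θ
  set t : ℝ := α * r / 2 with ht_def
  have htpos : 0 < t := by
    rw [ht_def]; exact div_pos (mul_pos hα0 hrpos) two_pos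
  have htc : t ≤ cθ := by
    have h1 : α * r ≤ r := mul_le_of_le_one_left hrpos.le hα1
    rw [ht_def]; linarith only [h1, hrle]
  have hkey : 0 < cβ + t * (cθ * cβ - sθ * sβ) :=
    keypos t cθ sθ cβ sβ htpos htc hcospos hcβθ hsβ0 hsβθ hpyth
  -- rewrite the parts using polar coordinates
  have hreP : E * (cβ + t * (cθ * cβ - sθ * sβ)) =
      c * ((lam + ρ) - (ρ + κ) * (u * u - v * v)) := by
    rw [← hre, hu_rcos, hv_rsin, ht_def]; ring
  have himP : E * (sβ * (1 + t * cθ) + cβ * (t * sθ)) =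
      c * (-(ρ + κ) * (2 * (r * cθ) * (r * sθ))) := by
    rw [hu_rcos, hv_rsin] at him2
    rw [ht_def]
    linear_combination him2
  have hrle2 : r ≤ 2 := by
    have := Real.cos_le_one θ
    rw [← hcθ_def] at this
    linarith only [this, hrle]
  have hr2le : r ^ 2 ≤ 4 := by
    have h1 := pow_le_pow_left₀ hrpos.le hrle2 2
    norm_num at h1
    linarith only [h1]
  have hb4 : 4 * (ρ + κ) > lam + ρ := by linarith only [hκ]
  have hEK : 0 < E * (cβ + t * (cθ * cβ - sθ * sβ)) := mul_pos hEpos hkey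
  rcases lt_or_ge (ρ + κ) 0 with hb | hb
  · -- b < 0 : the real part gives a contradiction
    have hx4 : u * u - v * v ≤ 4 := by
      nlinarith only [hr2, hr2le, sq_nonneg v]
    have hprod : 0 ≤ (4 - (u * u - v * v)) * (-(ρ + κ)) :=
      mul_nonneg (by linarith only [hx4]) (by linarith only [hb])
    have h6 : (lam + ρ) - (ρ + κ) * (u * u - v * v) < 0 := by
      nlinarith only [hprod, hb4]
    have h7 : c * ((lam + ρ) - (ρ + κ) * (u * u - v * v)) < 0 :=
      mul_neg_of_pos_of_neg hc h6
    linarith only [hEK, hreP, h7]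
  · -- b ≥ 0 : the imaginary part forces sin θ = 0
    have hsθ_eq : sθ = 0 := by
      by_contra hne
      have hsθpos : 0 < sθ := lt_of_le_of_ne hsθ0 (Ne.symm hne)
      have hcβpos : 0 < cβ := lt_of_lt_of_le hcospos hcβθ
      have h3 : 0 < cβ * (t * sθ) := mul_pos hcβpos (mul_pos htpos hsθpos)
      have h4 : 0 ≤ t * cθ := mul_nonneg htpos.le hcospos.le
      have h5 : 0 ≤ sβ * (1 + t * cθ) := mul_nonneg hsβ0 (by linarith only [h4])
      have hLHSpos : 0 < E * (sβ * (1 + t * cθ) + cβ * (t * sθ)) :=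
        mul_pos hEpos (by linarith only [h3, h5])
      have hQ : 0 ≤ 2 * (r * cθ) * (r * sθ) :=
        mul_nonneg (mul_nonneg (by norm_num) (mul_nonneg hrpos.le hcospos.le))
          (mul_nonneg hrpos.le hsθpos.le)
      have hRHSle : c * (-(ρ + κ) * (2 * (r * cθ) * (r * sθ))) ≤ 0 := by
        have h6 := mul_nonneg hc.le (mul_nonneg hb hQ)
        nlinarith only [h6]
      linarith only [himP, hLHSpos, hRHSle]
    have hsβ_eq : sβ = 0 := le_antisymm (by rw [← hsθ_eq]; exact hsβθ) hsβ0
    have hcθ_eq : cθ = 1 := by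
      rw [hsθ_eq] at hpyth
      norm_num at hpyth
      rcases hpyth with h' | h'
      · exact h'
      · linarith only [h', hcospos]
    have hv0 : v = 0 := by rw [hv_rsin, hsθ_eq]; ring
    have hcβ_eq : cβ = 1 := le_antisymm
      (by rw [hcβ_def]; exact Real.cos_le_one _) (by rw [← hcθ_eq]; exact hcβθ)
    have hfin : E * (1 + t) = c * ((lam + ρ) - (ρ + κ) * (u * u)) := by
      rw [hsβ_eq, hcβ_eq, hcθ_eq, hsθ_eq, hv0] at hreP
      linear_combination hreP
    have h5 : 0 < E * (1 + t) := mul_pos hEpos (by linarith only [htpos])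
    have h6 : (lam + ρ) - (ρ + κ) * (u * u) < 0 := by
      have := mul_nonneg hb (mul_nonneg hupos.le hupos.le)
      linarith only [this, hlam, hρ]
    have h7 : c * ((lam + ρ) - (ρ + κ) * (u * u)) < 0 :=
      mul_neg_of_pos_of_neg hc h6
    linarith only [hfin, h5, h7]

/-- Unconditional stability (p = q = 2): if λ < 0, ρ ≤ 0 and κ > (λ-3ρ)/4,
then (1-z)^α (1 + α/2 - (α/2)z) is never a positive real multiple of
λ - κ + (ρ+κ)(2z - z²) on the closed unit disk. -/
theorem uncond_stability_q2 (α lam ρ κ : ℝ) (hα0 : 0 < α) (hα1 : α ≤ 1)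
    (hlam : lam < 0) (hρ : ρ ≤ 0) (hκ : κ > (lam - 3 * ρ) / 4)
    (z : ℂ) (hz : ‖z‖ ≤ 1) (c : ℝ) (hc : 0 < c) :
    (1 - z) ^ (α : ℂ) * (1 + α / 2 - (α / 2) * z) ≠
      (c : ℂ) * ((lam : ℂ) - κ + (ρ + κ) * (2 * z - z ^ 2)) := by
  rcases le_or_gt z.im 0 with him | him
  · exact uncond_stability_q2_aux α lam ρ κ hα0 hα1 hlam hρ hκ z hz him c hc
  · intro h
    have hargne : (1 - z).arg ≠ Real.pi := by
      intro hp
      have hre' := (Complex.arg_eq_pi_iff.mp hp).1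
      have h1 : z.re ≤ ‖z‖ := Complex.re_le_norm z
      have hab : ‖z‖ ≤ 1 := by exact hz
      simp only [Complex.sub_re, Complex.one_re] at hre'
      linarith
    have hzc : ‖(starRingEnd ℂ) z‖ ≤ 1 := by rwa [RCLike.norm_conj]
    have himc : ((starRingEnd ℂ) z).im ≤ 0 := by
      rw [Complex.conj_im]; linarith
    apply uncond_stability_q2_aux α lam ρ κ hα0 hα1 hlam hρ hκ ((starRingEnd ℂ) z)
      hzc himc c hc
    have hc1 : (1 - (starRingEnd ℂ) z) ^ (α : ℂ) = (starRingEnd ℂ) ((1 - z) ^ (α : ℂ)) := by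
      have e : (1 - (starRingEnd ℂ) z) = (starRingEnd ℂ) (1 - z) := by
        rw [map_sub, map_one]
      rw [e, Complex.conj_cpow _ _ hargne, Complex.conj_ofReal]
    have hconj := congrArg (starRingEnd ℂ) h
    simp only [map_mul, map_sub, map_add, map_one, map_pow, map_ofNat,
      Complex.conj_ofReal, map_div₀] at hconj
    rw [hc1]
    linear_combination hconj
end

section
/- Let 0 < α ≤ 1 and let λ, ρ, κ be real numbers with λ < 0, ρ ≤ 0, and κ > (λ - ρ)/2. Then for every complex z with |z| ≤ 1 and every real c > 0, one has (1 - z)^α ≠ c · ((λ + ρ) - (ρ + κ)(1 - z)), where (·)^α is the principal branch. -/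
open Complex

lemma re_cpow_nonneg_aux {w : ℂ} {α : ℝ} (hα0 : 0 < α) (hα1 : α ≤ 1)
    (hw : 0 < w.re ∨ w = 0) : 0 ≤ (w ^ (α : ℂ)).re := by
  rcases hw with hw | rfl
  · have hne : w ≠ 0 := by
      intro h; rw [h] at hw; simp at hw
    rw [Complex.cpow_def_of_ne_zero hne, Complex.exp_re]
    have him : (Complex.log w * (α : ℂ)).im = w.arg * α := by
      simp [Complex.mul_im, Complex.log_im]
    have harg : |w.arg| < Real.pi / 2 :=
      Complex.abs_arg_lt_pi_div_two_iff.mpr (Or.inl hw)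
    have hcos : 0 < Real.cos ((Complex.log w * (α : ℂ)).im) := by
      rw [him]
      apply Real.cos_pos_of_mem_Ioo
      constructor
      · have : |w.arg * α| < Real.pi / 2 := by
          rw [abs_mul, abs_of_pos hα0]
          calc |w.arg| * α ≤ |w.arg| * 1 := by
                exact mul_le_mul_of_nonneg_left hα1 (abs_nonneg _)
            _ < Real.pi / 2 := by simpa using harg
        linarith [neg_abs_le (w.arg * α), abs_nonneg (w.arg * α), this]
      · calc w.arg * α ≤ |w.arg * α| := le_abs_self _
          _ < Real.pi / 2 := by
            rw [abs_mul, abs_of_pos hα0]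
            calc |w.arg| * α ≤ |w.arg| * 1 :=
                  mul_le_mul_of_nonneg_left hα1 (abs_nonneg _)
              _ < Real.pi / 2 := by simpa using harg
    positivity
  · have : ((α : ℂ)) ≠ 0 := by
      exact_mod_cast (ne_of_gt hα0)
    rw [Complex.zero_cpow this]
    simp

/-- Unconditional stability (p = q = 1): if λ < 0, ρ ≤ 0 and κ > (λ-ρ)/2,
then (1-z)^α is never a positive real multiple of (λ+ρ) - (ρ+κ)(1-z)
on the closed unit disk. -/
theorem uncond_stability_q1 (α lam ρ κ : ℝ) (hα0 : 0 < α) (hα1 : α ≤ 1)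
    (hlam : lam < 0) (hρ : ρ ≤ 0) (hκ : κ > (lam - ρ) / 2)
    (z : ℂ) (hz : ‖z‖ ≤ 1) (c : ℝ) (hc : 0 < c) :
    (1 - z) ^ (α : ℂ) ≠
      (c : ℂ) * (((lam : ℝ) + ρ : ℝ) - ((ρ : ℝ) + κ : ℝ) * (1 - z)) := by
  intro heq
  set w : ℂ := 1 - z with hwdef
  -- |1 - w| ≤ 1  gives  |w|² ≤ 2 Re w
  have hz2 : ‖z‖ ^ 2 ≤ 1 := by nlinarith [norm_nonneg z]
  have hnsq : Complex.normSq z ≤ 1 := by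
    have : Complex.normSq z = ‖z‖ ^ 2 := by
      rw [Complex.normSq_eq_norm_sq]
    linarith
  have hre_wpos : 0 < w.re ∨ w = 0 := by
    by_cases hw0 : w = 0
    · exact Or.inr hw0
    · left
      have hzw : z = 1 - w := by rw [hwdef]; ring
      have : Complex.normSq (1 - w) ≤ 1 := by rw [← hzw]; exact hnsq
      have hexp : Complex.normSq (1 - w) = 1 - 2 * w.re + Complex.normSq w := by
        simp only [Complex.normSq_apply, Complex.sub_re, Complex.sub_im,
          Complex.one_re, Complex.one_im]
        ring
      have h1 : Complex.normSq w ≤ 2 * w.re := by nlinarith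
      have h2 : 0 < Complex.normSq w := Complex.normSq_pos.mpr hw0
      linarith
  -- Re of LHS is ≥ 0
  have hL : 0 ≤ (w ^ (α : ℂ)).re := re_cpow_nonneg_aux hα0 hα1 hre_wpos
  -- Re w ∈ [0, 2]
  have hre0 : 0 ≤ w.re := by
    rcases hre_wpos with h | h
    · linarith
    · rw [h]; simp
  have hre2 : w.re ≤ 2 := by
    have : |z.re| ≤ 1 := by
      calc |z.re| ≤ ‖z‖ := Complex.abs_re_le_norm z
        _ ≤ 1 := hz
    have : -1 ≤ z.re := by cases abs_le.mp this; linarith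
    have hw : w.re = 1 - z.re := by rw [hwdef]; simp
    linarith
  -- Re of RHS is < 0
  have hR : ((c : ℂ) * (((lam : ℝ) + ρ : ℝ) - ((ρ : ℝ) + κ : ℝ) * w)).re
      = c * ((lam + ρ) - (ρ + κ) * w.re) := by
    simp [Complex.mul_re, Complex.sub_re, Complex.ofReal_re, Complex.ofReal_im]
  have hRneg : c * ((lam + ρ) - (ρ + κ) * w.re) < 0 := by
    have : (lam + ρ) - (ρ + κ) * w.re < 0 := by
      rcases le_or_gt 0 (ρ + κ) with h | h
      · nlinarith
      · nlinarith
    exact mul_neg_of_pos_of_neg hc this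
  have := congrArg Complex.re heq
  rw [hR] at this
  linarith [hL, hRneg, this.ge, this.le]
end

section
/- Let (Q_n)_{n≥0} and (H_n)_{n≥0} be sequences of complex numbers with Σ |Q_n| < ∞, Q(z) = Σ Q_n z^n ≠ 0 for all |z| ≤ 1, H_n → 0 as n → ∞, and sup_n |H_n| < ∞. Define (U_n) by the convolution equation Σ_{j=0}^n Q_{n-j} U_j = H_n for all n ≥ 0. Then U_n → 0 as n → ∞. -/
open Filter Finset
open scoped ENNReal

noncomputable section WienerAux

/-- The ℓ¹ sequence space over ℂ, to be equipped with the convolution (Cauchy) product. -/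
def Wien : Type := lp (fun _ : ℕ => ℂ) 1

namespace Wien

instance : NormedAddCommGroup Wien := inferInstanceAs (NormedAddCommGroup (lp (fun _ : ℕ => ℂ) 1))
instance : NormedSpace ℂ Wien := inferInstanceAs (NormedSpace ℂ (lp (fun _ : ℕ => ℂ) 1))
instance : CompleteSpace Wien := inferInstanceAs (CompleteSpace (lp (fun _ : ℕ => ℂ) 1))

/-- coefficients -/
def cf (a : Wien) : ℕ → ℂ := (show lp (fun _ : ℕ => ℂ) 1 from a : ∀ _ : ℕ, ℂ)

theorem toReal_one_pos : (0:ℝ) < (1 : ℝ≥0∞).toReal := by norm_num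

theorem summable_norm_cf (a : Wien) : Summable fun n => ‖cf a n‖ := by
  have := lp.memℓp (show lp (fun _ : ℕ => ℂ) 1 from a)
  rw [memℓp_gen_iff toReal_one_pos] at this
  simpa [cf] using this

/-- constructor -/
def mk (f : ℕ → ℂ) (hf : Summable fun n => ‖f n‖) : Wien :=
  show lp (fun _ : ℕ => ℂ) 1 from ⟨f, (memℓp_gen_iff toReal_one_pos).2 (by simpa using hf)⟩

@[simp] theorem cf_mk (f : ℕ → ℂ) (hf : Summable fun n => ‖f n‖) : cf (mk f hf) = f := rfl

theorem cf_injective : Function.Injective cf := by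
  intro a b h
  exact Subtype.ext h

@[simp] theorem cf_zero : cf (0 : Wien) = 0 := rfl
@[simp] theorem cf_add (a b : Wien) : cf (a + b) = cf a + cf b := rfl
@[simp] theorem cf_neg (a : Wien) : cf (-a) = -cf a := rfl
@[simp] theorem cf_sub (a b : Wien) : cf (a - b) = cf a - cf b := rfl
@[simp] theorem cf_smul (c : ℂ) (a : Wien) : cf (c • a) = c • cf a := rfl
@[simp] theorem cf_nsmul (n : ℕ) (a : Wien) : cf (n • a) = n • cf a := rfl
@[simp] theorem cf_zsmul (n : ℤ) (a : Wien) : cf (n • a) = n • cf a := rfl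

instance : Mul Wien :=
  ⟨fun a b => mk (fun n => ∑ kl ∈ Finset.HasAntidiagonal.antidiagonal n, cf a kl.1 * cf b kl.2)
    (summable_norm_sum_mul_antidiagonal_of_summable_norm (summable_norm_cf a) (summable_norm_cf b))⟩

theorem cf_mul (a b : Wien) (n : ℕ) :
    cf (a * b) n = ∑ kl ∈ Finset.HasAntidiagonal.antidiagonal n, cf a kl.1 * cf b kl.2 := rfl

/-- element with a single coefficient -/
def single (i : ℕ) (c : ℂ) : Wien := show lp (fun _ : ℕ => ℂ) 1 from lp.single 1 i c

theorem cf_single (i : ℕ) (c : ℂ) (j : ℕ) : cf (single i c) j = if j = i then c else 0 := by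
  rcases eq_or_ne j i with h | h
  · subst h; simp [single, cf, lp.single_apply_self]
  · simp [single, cf, lp.single_apply_ne _ _ _ h, h]

instance : One Wien := ⟨single 0 1⟩
instance : NatCast Wien := ⟨fun n => single 0 n⟩
instance : IntCast Wien := ⟨fun n => single 0 n⟩
instance : Pow Wien ℕ := ⟨fun a n => npowRec n a⟩

theorem cf_one (j : ℕ) : cf (1 : Wien) j = if j = 0 then 1 else 0 := cf_single 0 1 j

/-- coefficient map to power series -/
def toPS (a : Wien) : PowerSeries ℂ := PowerSeries.mk (cf a)

theorem toPS_injective : Function.Injective toPS := by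
  intro a b h
  apply cf_injective
  funext n
  simpa [toPS, PowerSeries.coeff_mk] using congrArg (PowerSeries.coeff n) h

theorem toPS_mul (a b : Wien) : toPS (a * b) = toPS a * toPS b := by
  apply PowerSeries.ext fun n => ?_
  simp [toPS, PowerSeries.coeff_mk, PowerSeries.coeff_mul, cf_mul]

theorem toPS_one : toPS (1 : Wien) = 1 := by
  apply PowerSeries.ext fun n => ?_
  simp [toPS, PowerSeries.coeff_mk, PowerSeries.coeff_one, cf_one]

instance : CommRing Wien :=
  Function.Injective.commRing toPS toPS_injective
    (by apply PowerSeries.ext fun n => ?_; simp [toPS])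
    toPS_one
    (fun a b => by apply PowerSeries.ext fun n => ?_; simp [toPS])
    toPS_mul
    (fun a => by apply PowerSeries.ext fun n => ?_; simp [toPS])
    (fun a b => by apply PowerSeries.ext fun n => ?_; simp [toPS])
    (fun n a => by apply PowerSeries.ext fun m => ?_; rw [map_nsmul]; simp [toPS])
    (fun n a => by apply PowerSeries.ext fun m => ?_; rw [map_zsmul]; simp [toPS])
    (fun a n => by
      induction n with
      | zero => exact toPS_one
      | succ k ih =>
        show toPS (npowRec k a * a) = _
        rw [toPS_mul, show toPS (npowRec k a) = a.toPS ^ k from ih, ← pow_succ])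
    (fun n => by
      apply PowerSeries.ext fun m => ?_
      show PowerSeries.coeff m (PowerSeries.mk (cf (single 0 (n : ℂ)))) = _
      rw [← map_natCast (PowerSeries.C (R := ℂ)) n, PowerSeries.coeff_C]
      simp [PowerSeries.coeff_mk, cf_single])
    (fun n => by
      apply PowerSeries.ext fun m => ?_
      show PowerSeries.coeff m (PowerSeries.mk (cf (single 0 (n : ℂ)))) = _
      rw [← map_intCast (PowerSeries.C (R := ℂ)) n, PowerSeries.coeff_C]
      simp [PowerSeries.coeff_mk, cf_single])



theorem cf_mul' (a b : Wien) (n : ℕ) :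
    cf (a * b) n = ∑ kl ∈ Finset.HasAntidiagonal.antidiagonal n, cf a kl.1 * cf b kl.2 := cf_mul a b n

theorem norm_eq (a : Wien) : ‖a‖ = ∑' n, ‖cf a n‖ := by
  have := lp.norm_rpow_eq_tsum toReal_one_pos (show lp (fun _ : ℕ => ℂ) 1 from a)
  simp at this
  exact this

theorem norm_mul_le' (a b : Wien) : ‖a * b‖ ≤ ‖a‖ * ‖b‖ := by
  rw [norm_eq, norm_eq, norm_eq]
  have ha := summable_norm_cf a
  have hb := summable_norm_cf b
  have ha2 : Summable fun n : ℕ => ‖‖cf a n‖‖ := by simpa using ha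
  have hb2 : Summable fun n : ℕ => ‖‖cf b n‖‖ := by simpa using hb
  have key : (∑' n, ‖cf a n‖) * ∑' n, ‖cf b n‖
      = ∑' n, ∑ kl ∈ Finset.HasAntidiagonal.antidiagonal n, ‖cf a kl.1‖ * ‖cf b kl.2‖ := by
    exact tsum_mul_tsum_eq_tsum_sum_antidiagonal_of_summable_norm (R := ℝ)
      (f := fun n => ‖cf a n‖) (g := fun n => ‖cf b n‖) ha2 hb2
  rw [key]
  apply Summable.tsum_le_tsum
  · intro n
    rw [cf_mul']
    exact norm_sum_le_of_le _ fun kl _ => norm_mul_le _ _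
  · simpa only [cf_mul'] using summable_norm_sum_mul_antidiagonal_of_summable_norm ha hb
  · exact summable_sum_mul_antidiagonal_of_summable_mul
      (f := fun n => ‖cf a n‖) (g := fun n => ‖cf b n‖)
      (summable_mul_of_summable_norm (R := ℝ)
        (f := fun n => ‖cf a n‖) (g := fun n => ‖cf b n‖) ha2 hb2)

theorem norm_single (i : ℕ) (c : ℂ) : ‖single i c‖ = ‖c‖ :=
  lp.norm_single (E := fun _ : ℕ => ℂ) (p := 1) (by norm_num) i c

theorem norm_one' : ‖(1 : Wien)‖ = 1 := by
  exact (norm_single 0 1).trans norm_one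

instance : NormedRing Wien :=
  { Wien.instNormedAddCommGroup, Wien.instCommRing with
    dist_eq := fun x y => NormedAddCommGroup.dist_eq x y
    norm_mul_le := norm_mul_le' }

instance : NormedCommRing Wien := { Wien.instNormedRing with mul_comm := mul_comm }

instance : Algebra ℂ Wien :=
  Algebra.ofModule
    (fun c a b => by
      apply cf_injective; funext n
      simp only [cf_mul, cf_smul, Pi.smul_apply, smul_eq_mul, Finset.mul_sum]
      exact Finset.sum_congr rfl fun kl _ => by ring)
    (fun c a b => by
      apply cf_injective; funext n
      simp only [cf_mul, cf_smul, Pi.smul_apply, smul_eq_mul, Finset.mul_sum]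
      exact Finset.sum_congr rfl fun kl _ => by ring)

instance : NormedAlgebra ℂ Wien :=
  { (inferInstance : Algebra ℂ Wien) with norm_smul_le := fun c a => norm_smul_le c a }

end Wien

end WienerAux

namespace Wien

theorem single_mul_single (i j : ℕ) (c d : ℂ) :
    single i c * single j d = single (i + j) (c * d) := by
  apply cf_injective; funext n
  rw [cf_mul']
  rcases eq_or_ne n (i + j) with rfl | hn
  · rw [Finset.sum_eq_single_of_mem (i, j) (by simp [Finset.mem_antidiagonal])]
    · simp [cf_single]
    · rintro ⟨k, l⟩ hkl hne
      rw [Finset.HasAntidiagonal.mem_antidiagonal] at hkl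
      rcases eq_or_ne k i with rfl | hk
      · have : l = j := by omega
        exact absurd (by rw [this]) hne
      · simp [cf_single, hk]
  · rw [Finset.sum_eq_zero, cf_single, if_neg hn]
    rintro ⟨k, l⟩ hkl
    rw [Finset.HasAntidiagonal.mem_antidiagonal] at hkl
    rcases eq_or_ne k i with rfl | hk
    · have : l ≠ j := by omega
      simp [cf_single, this]
    · simp [cf_single, hk]

theorem single_eq_smul (i : ℕ) (c : ℂ) : single i c = c • single i 1 := by
  apply cf_injective; funext n
  by_cases h : n = i <;> simp [cf_single, cf_smul, h]

theorem pow_single_one (n : ℕ) : (single 1 1 : Wien) ^ n = single n 1 := by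
  induction n with
  | zero => rfl
  | succ k ih => rw [pow_succ, ih, single_mul_single, mul_one]

theorem hasSum_single' (a : Wien) : HasSum (fun i => single i (cf a i)) a :=
  lp.hasSum_single (E := fun _ : ℕ => ℂ) (p := 1) (by norm_num) (show lp (fun _ : ℕ => ℂ) 1 from a)

open WeakDual in
theorem char_apply (φ : characterSpace ℂ Wien) (a : Wien) :
    HasSum (fun n => cf a n * (φ (single 1 1)) ^ n) (φ a) := by
  have h1 := (hasSum_single' a).mapL (CharacterSpace.toCLM φ)
  have h2 : ∀ i, (CharacterSpace.toCLM φ) (single i (cf a i))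
      = cf a i * (φ (single 1 1)) ^ i := by
    intro i
    rw [CharacterSpace.coe_toCLM]
    calc φ (single i (cf a i)) = φ (cf a i • ((single 1 1 : Wien) ^ i)) := by
          rw [pow_single_one, ← single_eq_smul]
      _ = cf a i * (φ (single 1 1)) ^ i := by
          rw [map_smul, map_pow, smul_eq_mul]
  rw [CharacterSpace.coe_toCLM] at h1
  exact h1.congr_fun fun i => (h2 i).symm

open WeakDual in
theorem char_norm_le (φ : characterSpace ℂ Wien) : ‖φ (single 1 1)‖ ≤ 1 := by
  have h1 : ‖CharacterSpace.toCLM φ‖ ≤ 1 := by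
    have := CharacterSpace.norm_le_norm_one φ
    rwa [norm_one'] at this
  calc ‖φ (single 1 1)‖ = ‖(CharacterSpace.toCLM φ) (single 1 1)‖ := rfl
    _ ≤ ‖CharacterSpace.toCLM φ‖ * ‖single 1 1‖ := (CharacterSpace.toCLM φ).le_opNorm _
    _ ≤ 1 * 1 := by
        apply mul_le_mul h1 (le_of_eq (by simpa using norm_single 1 1)) (norm_nonneg _) zero_le_one
    _ = 1 := by norm_num

end Wien

/-- Wiener-type stability lemma: if Q has absolutely summable coefficients
and no zero of its power series on the closed unit disk, H_n → 0 is bounded,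
and Σ_{j=0}^n Q_{n-j} U_j = H_n, then U_n → 0. -/
theorem wiener_stability (Q H U : ℕ → ℂ)
    (hQ : Summable fun n => ‖Q n‖)
    (hQ0 : ∀ z : ℂ, ‖z‖ ≤ 1 → (∑' n : ℕ, Q n * z ^ n) ≠ 0)
    (hH : Tendsto H atTop (nhds 0))
    (hHb : ∃ B : ℝ, ∀ n, ‖H n‖ ≤ B)
    (hconv : ∀ n : ℕ, ∑ j ∈ Finset.range (n + 1), Q (n - j) * U j = H n) :
    Tendsto U atTop (nhds 0) := by
  obtain ⟨B, hB⟩ := hHb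
  have hB0 : 0 ≤ B := le_trans (norm_nonneg _) (hB 0)
  set qa : Wien := Wien.mk Q hQ with hqa
  -- Wiener's theorem via Gelfand theory: qa is invertible in the ℓ¹ algebra
  have hunit : IsUnit qa := by
    by_contra hnu
    obtain ⟨φ, hφ⟩ := WeakDual.CharacterSpace.exists_apply_eq_zero hnu
    have hz := Wien.char_norm_le φ
    have hsum := Wien.char_apply φ qa
    exact hQ0 _ hz (by simpa [hqa, Wien.cf_mk] using hsum.tsum_eq.trans hφ)
  obtain ⟨u, hu⟩ := hunit
  set r : Wien := ↑u⁻¹ with hr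
  have hqr : qa * r = 1 := by rw [← hu, hr]; exact u.mul_inv
  set hps : PowerSeries ℂ := PowerSeries.mk H with hhps
  set ups : PowerSeries ℂ := PowerSeries.mk U with hups
  have hQU : Wien.toPS qa * ups = hps := by
    apply PowerSeries.ext fun n => ?_
    rw [PowerSeries.coeff_mul, Finset.Nat.sum_antidiagonal_eq_sum_range_succ_mk]
    simp only [Wien.toPS, PowerSeries.coeff_mk, Wien.cf_mk, hups, hhps]
    rw [← hconv n, ← Finset.sum_range_reflect (fun j => Q (n - j) * U j) (n + 1)]
    apply Finset.sum_congr rfl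
    intro j hj
    rw [Finset.mem_range] at hj
    have h1 : n + 1 - 1 - j = n - j := by omega
    have h2 : n - (n - j) = j := by omega
    rw [h1, h2, hqa, Wien.cf_mk]
  have hUR : ups = Wien.toPS r * hps := by
    have h1 : Wien.toPS qa * Wien.toPS r = 1 := by
      rw [← Wien.toPS_mul, hqr, Wien.toPS_one]
    calc ups = 1 * ups := (one_mul _).symm
      _ = Wien.toPS r * Wien.toPS qa * ups := by rw [mul_comm (Wien.toPS r), h1]
      _ = Wien.toPS r * hps := by rw [mul_assoc, hQU]
  have hUform : ∀ n, U n = ∑ k ∈ Finset.range (n + 1), Wien.cf r k * H (n - k) := by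
    intro n
    have h := congrArg (PowerSeries.coeff n) hUR
    rw [PowerSeries.coeff_mul, Finset.Nat.sum_antidiagonal_eq_sum_range_succ_mk] at h
    simpa [hups, hhps, Wien.toPS, PowerSeries.coeff_mk] using h
  set R : ℕ → ℂ := Wien.cf r with hRdef
  have hR : Summable fun n => ‖R n‖ := Wien.summable_norm_cf r
  have key : Tendsto (fun n => ∑' k : ℕ, (if k ≤ n then R k * H (n - k) else 0))
      atTop (nhds 0) := by
    have key' : Tendsto (fun n => ∑' k : ℕ, (if k ≤ n then R k * H (n - k) else 0))
        atTop (nhds (∑' _ : ℕ, (0 : ℂ))) := by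
      apply tendsto_tsum_of_dominated_convergence (bound := fun k => ‖R k‖ * B) (hR.mul_right B)
      · intro k
        have h1 : Tendsto (fun n => R k * H (n - k)) atTop (nhds 0) := by
          have h2 := hH.comp (tendsto_sub_atTop_nat k)
          simpa using h2.const_mul (R k)
        apply h1.congr'
        filter_upwards [eventually_ge_atTop k] with n hn
        rw [if_pos hn]
      · filter_upwards with n k
        by_cases hk : k ≤ n
        · rw [if_pos hk, norm_mul]
          exact mul_le_mul_of_nonneg_left (hB _) (norm_nonneg _)
        · rw [if_neg hk, norm_zero]
          exact mul_nonneg (norm_nonneg _) hB0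
    simpa using key'
  have heq : ∀ n, (∑' k : ℕ, (if k ≤ n then R k * H (n - k) else 0)) = U n := by
    intro n
    rw [hUform n, tsum_eq_sum (s := Finset.range (n + 1))]
    · apply Finset.sum_congr rfl
      intro k hk
      rw [Finset.mem_range] at hk
      rw [if_pos (by omega)]
    · intro k hk
      rw [Finset.mem_range] at hk
      rw [if_neg (by omega)]
  exact key.congr heq
end
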